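/- Let b be a nondegenerate bilinear form (symmetric or alternating) on a finite-dimensional vector space V over a field of characteristic not 2, and let u be an isometry of b. Then for every natural number k, the b-orthogonal complement of range (u - id)^k equals ker (u - id)^k. -/

import Mathlib

/-- For a nondegenerate symmetric or alternating bilinear form `b` and an isometry `u` of `b`,
the `b`-orthogonal complement of `range (u - id)^k` equals `ker (u - id)^k`. -/
theorem stmt8 {F V : Type*} [Field F] (h2 : (2 : F) ≠ 0)
    [AddCommGroup V] [Module F V] [FiniteDimensional F V]
    (b : LinearMap.BilinForm F V) (hb : b.Nondegenerate)
    (hsym : (∀ x y, b x y = b y x) ∨ (∀ x, b x x = 0))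
    (u : Module.End F V) (hbij : Function.Bijective u)
    (hiso : ∀ x y, b (u x) (u y) = b x y) :
    ∀ (k : ℕ) (x : V),
      (∀ w ∈ LinearMap.range ((u - 1) ^ k), b x w = 0)
        ↔ x ∈ LinearMap.ker ((u - 1) ^ k) := by
  let e : V ≃ₗ[F] V := LinearEquiv.ofBijective u hbij
  set v : Module.End F V := (e.symm : V →ₗ[F] V) with hv
  have huvx : ∀ x, u (v x) = x := fun x => e.apply_symm_apply x
  have hvux : ∀ x, v (u x) = x := fun x => e.symm_apply_apply x
  have huv : u * v = 1 := LinearMap.ext huvx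
  have hvu : v * u = 1 := LinearMap.ext hvux
  -- kernel transfer lemma
  have aux : ∀ (a c : Module.End F V), c * a = 1 → a * c = 1 →
      ∀ (k : ℕ) (x : V), ((a - 1) ^ k) x = 0 → ((c - 1) ^ k) x = 0 := by
    intro a c hca hac k x hx
    have h1 : (c - 1) = (-c) * (a - 1) := by
      rw [neg_mul, mul_sub, hca, mul_one, neg_sub]
    have hcomm : Commute (-c) (a - 1) := by
      unfold Commute SemiconjBy
      rw [neg_mul, mul_neg, mul_sub, sub_mul, hca, hac, mul_one, one_mul]
    have h2 : (c - 1) ^ k = (-c) ^ k * (a - 1) ^ k := by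
      rw [h1, hcomm.mul_pow]
    rw [h2]
    show ((-c) ^ k) (((a - 1) ^ k) x) = 0
    rw [hx, map_zero]
  have hadj : ∀ x y, b x (u y) = b (v x) y := by
    intro x y
    conv_lhs => rw [← huvx x]
    exact hiso (v x) y
  have hstep : ∀ x y, b x ((u - 1) y) = b ((v - 1) x) y := by
    intro x y
    simp [LinearMap.sub_apply, map_sub, hadj]
  have hpow : ∀ (k : ℕ) (x y : V), b x (((u - 1) ^ k) y) = b (((v - 1) ^ k) x) y := by
    intro k
    induction k with
    | zero => intro x y; simp
    | succ k ih =>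
      intro x y
      rw [pow_succ, Module.End.mul_apply, ih, hstep, pow_succ', Module.End.mul_apply]
  intro k x
  constructor
  · intro h
    rw [LinearMap.mem_ker]
    have h' : ∀ y, b (((v - 1) ^ k) x) y = 0 := by
      intro y
      rw [← hpow]
      exact h _ ⟨y, rfl⟩
    have hz : ((v - 1) ^ k) x = 0 := hb.1 _ h'
    exact aux v u huv hvu k x hz
  · intro h y hy
    obtain ⟨z, rfl⟩ := hy
    rw [hpow]
    have hz : ((v - 1) ^ k) x = 0 := aux u v hvu huv k x h
    rw [hz, map_zero, LinearMap.zero_apply]
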